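/- Let D ⊆ ℝ² be open, let N₀ : D → ℂ³ be differentiable with (N₀ p) ⬝ (N₀ p) = 1 for all p, and let R : D → Matrix (Fin 3) (Fin 3) ℂ be differentiable with R p invertible for all p. Define R' : D → Matrix (Fin 3) (Fin 3) ℂ by R' p := R p * (1 − 2 • Matrix.vecMulVec (N₀ p) (N₀ p)). Then R' p is invertible, and for all p ∈ D and v ∈ ℝ²: N₀ p × (((R' p)⁻¹ * fderiv ℝ R' p v).mulVec (N₀ p)) = −(N₀ p × (((R p)⁻¹ * fderiv ℝ R p v).mulVec (N₀ p))) − 2 • (N₀ p × fderiv ℝ N₀ p v). (This is the paper's relation ω' = −ω − 2 N₀ × dN₀, equation (2.8), for the rolling with the other face.) -/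

import Mathlib

open Matrix

noncomputable instance : NormedAddCommGroup (Matrix (Fin 3) (Fin 3) ℂ) :=
  Matrix.normedAddCommGroup

noncomputable instance : NormedSpace ℝ (Matrix (Fin 3) (Fin 3) ℂ) :=
  Matrix.normedSpace

/-- The symmetric bilinear dot product on ℂ³ (not the Hermitian inner product). -/
def dot3 (x y : Fin 3 → ℂ) : ℂ := x 0 * y 0 + x 1 * y 1 + x 2 * y 2

/-- The standard cross product on ℂ³. -/
def cross3 (x y : Fin 3 → ℂ) : Fin 3 → ℂ := crossProduct x y

namespace OtherFaceAux

abbrev A3 := Matrix (Fin 3) (Fin 3) ℂ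
abbrev V3 := Fin 3 → ℂ

/-- Upgrade a bilinear map to a continuous bilinear map (finite-dimensional domains). -/
noncomputable def bilinCLM {E F G : Type*} [NormedAddCommGroup E] [NormedSpace ℝ E]
    [NormedAddCommGroup F] [NormedSpace ℝ F] [NormedAddCommGroup G] [NormedSpace ℝ G]
    [FiniteDimensional ℝ E] [FiniteDimensional ℝ F]
    (B : E →ₗ[ℝ] F →ₗ[ℝ] G) : E →L[ℝ] F →L[ℝ] G :=
  LinearMap.toContinuousLinearMap
    (((LinearMap.toContinuousLinearMap :
        (F →ₗ[ℝ] G) ≃ₗ[ℝ] (F →L[ℝ] G)) : (F →ₗ[ℝ] G) →ₗ[ℝ] (F →L[ℝ] G)).comp B)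

@[simp] lemma bilinCLM_apply {E F G : Type*} [NormedAddCommGroup E] [NormedSpace ℝ E]
    [NormedAddCommGroup F] [NormedSpace ℝ F] [NormedAddCommGroup G] [NormedSpace ℝ G]
    [FiniteDimensional ℝ E] [FiniteDimensional ℝ F]
    (B : E →ₗ[ℝ] F →ₗ[ℝ] G) (x : E) (y : F) : bilinCLM B x y = B x y := by
  simp [bilinCLM]

lemma hasFDerivAt_bilin {X E F G : Type*} [NormedAddCommGroup X] [NormedSpace ℝ X]
    [NormedAddCommGroup E] [NormedSpace ℝ E]
    [NormedAddCommGroup F] [NormedSpace ℝ F] [NormedAddCommGroup G] [NormedSpace ℝ G]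
    (B : E →L[ℝ] F →L[ℝ] G) {f : X → E} {g : X → F} {p : X}
    {f' : X →L[ℝ] E} {g' : X →L[ℝ] F}
    (hf : HasFDerivAt f f' p) (hg : HasFDerivAt g g' p) :
    HasFDerivAt (fun q => B (f q) (g q))
      ((B.isBoundedBilinearMap.deriv (f p, g p)).comp (f'.prod g')) p :=
  (B.isBoundedBilinearMap.hasFDerivAt (f p, g p)).comp (f := fun q => (f q, g q)) p (HasFDerivAt.prodMk hf hg)

noncomputable def mulB : A3 →ₗ[ℝ] A3 →ₗ[ℝ] A3 := LinearMap.mul ℝ A3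

noncomputable def vvB : V3 →ₗ[ℝ] V3 →ₗ[ℝ] A3 :=
  LinearMap.mk₂ ℝ Matrix.vecMulVec
    (fun a b c => by ext i j; simp [Matrix.vecMulVec_apply, add_mul])
    (fun r a b => by ext i j; simp [Matrix.vecMulVec_apply]; ring)
    (fun a b c => by ext i j; simp [Matrix.vecMulVec_apply, mul_add])
    (fun r a b => by ext i j; simp [Matrix.vecMulVec_apply]; ring)

noncomputable def dotB : V3 →ₗ[ℝ] V3 →ₗ[ℝ] ℂ :=
  LinearMap.mk₂ ℝ dotProduct
    (fun a b c => by simp [add_dotProduct])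
    (fun r a b => by simp [smul_dotProduct])
    (fun a b c => by simp [dotProduct_add])
    (fun r a b => by simp [dotProduct_smul])

lemma dot3_eq (x y : V3) : x ⬝ᵥ y = dot3 x y := by
  simp [dot3, dotProduct, Fin.sum_univ_three]

lemma vv_mul_vv (a b c d : V3) :
    vecMulVec a b * vecMulVec c d = (b ⬝ᵥ c) • vecMulVec a d := by
  ext i j
  simp [Matrix.mul_apply, Matrix.vecMulVec_apply, dotProduct, Finset.sum_mul]
  exact Finset.sum_congr rfl fun k _ => by ring

lemma vv_mulVec (a b c : V3) : (vecMulVec a b).mulVec c = (b ⬝ᵥ c) • a := by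
  ext i
  simp [Matrix.mulVec, Matrix.vecMulVec_apply, dotProduct, Finset.sum_mul, Finset.mul_sum]
  exact Finset.sum_congr rfl fun k _ => by ring

lemma refl_sq (V : A3) (h : V * V = V) : (1 - 2 • V) * (1 - 2 • V) = 1 := by
  rw [two_smul]
  noncomm_ring
  rw [h]; abel

end OtherFaceAux

open OtherFaceAux

/-- The paper's relation ω' = −ω − 2 N₀ × dN₀, equation (2.8), for the rolling
with the other face R' = R(I − 2N₀N₀ᵀ). -/
theorem other_face_connection (D : Set (ℝ × ℝ)) (hD : IsOpen D)
    (N₀ : ℝ × ℝ → Fin 3 → ℂ) (hN₀ : DifferentiableOn ℝ N₀ D)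
    (hunit : ∀ p, dot3 (N₀ p) (N₀ p) = 1)
    (R : ℝ × ℝ → Matrix (Fin 3) (Fin 3) ℂ) (hR : DifferentiableOn ℝ R D)
    (hinv : ∀ p ∈ D, IsUnit (R p))
    (R' : ℝ × ℝ → Matrix (Fin 3) (Fin 3) ℂ)
    (hR' : ∀ p, R' p = R p * (1 - 2 • Matrix.vecMulVec (N₀ p) (N₀ p))) :
    ∀ p ∈ D, IsUnit (R' p) ∧
      ∀ v : ℝ × ℝ,
        cross3 (N₀ p) (((R' p)⁻¹ * fderiv ℝ R' p v).mulVec (N₀ p)) =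
          -(cross3 (N₀ p) (((R p)⁻¹ * fderiv ℝ R p v).mulVec (N₀ p))) -
            2 • cross3 (N₀ p) (fderiv ℝ N₀ p v) := by
  intro p hp
  have hmem : D ∈ nhds p := hD.mem_nhds hp
  have hNp : DifferentiableAt ℝ N₀ p := hN₀.differentiableAt hmem
  have hRp : DifferentiableAt ℝ R p := hR.differentiableAt hmem
  set n : V3 := N₀ p with hn
  have hnn : n ⬝ᵥ n = 1 := by rw [dot3_eq]; exact hunit p
  set Mf : ℝ × ℝ → A3 := fun q => (1 : A3) - 2 • vecMulVec (N₀ q) (N₀ q) with hMf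
  have hVV1 : vecMulVec n n * vecMulVec n n = vecMulVec n n := by
    rw [vv_mul_vv, hnn, one_smul]
  have hMM : Mf p * Mf p = 1 := refl_sq _ hVV1
  have hMunit : IsUnit (Mf p) := ⟨⟨Mf p, Mf p, hMM, hMM⟩, rfl⟩
  have hMinv : (Mf p)⁻¹ = Mf p := Matrix.inv_eq_right_inv hMM
  have hR'p : R' p = R p * Mf p := hR' p
  have hR'fun : R' = fun q => R q * Mf q := funext fun q => hR' q
  refine ⟨by rw [hR'p]; exact (hinv p hp).mul hMunit, ?_⟩
  intro v
  set dn : V3 := fderiv ℝ N₀ p v with hdn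
  set dR : A3 := fderiv ℝ R p v with hdR
  have hN' : HasFDerivAt N₀ (fderiv ℝ N₀ p) p := hNp.hasFDerivAt
  -- derivative of the vecMulVec part
  have hW : HasFDerivAt (fun q => vecMulVec (N₀ q) (N₀ q))
      (((bilinCLM vvB).isBoundedBilinearMap.deriv (n, n)).comp
        ((fderiv ℝ N₀ p).prod (fderiv ℝ N₀ p))) p :=
    hasFDerivAt_bilin (bilinCLM vvB) hN' hN'
  have hMd : HasFDerivAt Mf
      ((0 : (ℝ × ℝ) →L[ℝ] A3) - 2 • (((bilinCLM vvB).isBoundedBilinearMap.deriv (n, n)).comp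
        ((fderiv ℝ N₀ p).prod (fderiv ℝ N₀ p)))) p :=
    (hasFDerivAt_const (1 : A3) p).sub (hW.const_smul 2)
  set dM : A3 := -(2 • (vecMulVec n dn + vecMulVec dn n)) with hdM
  have hMdv : ((0 : (ℝ × ℝ) →L[ℝ] A3) - 2 • (((bilinCLM vvB).isBoundedBilinearMap.deriv (n, n)).comp
        ((fderiv ℝ N₀ p).prod (fderiv ℝ N₀ p)))) v = dM := by
    show (0 : A3) - 2 • (vecMulVec n dn + vecMulVec dn n) = dM
    rw [hdM]
    abel
  -- derivative of R'
  have hR'd : HasFDerivAt R'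
      (((bilinCLM mulB).isBoundedBilinearMap.deriv (R p, Mf p)).comp
        ((fderiv ℝ R p).prod ((0 : (ℝ × ℝ) →L[ℝ] A3) -
          2 • (((bilinCLM vvB).isBoundedBilinearMap.deriv (n, n)).comp
            ((fderiv ℝ N₀ p).prod (fderiv ℝ N₀ p)))))) p := by
    rw [hR'fun]
    exact hasFDerivAt_bilin (bilinCLM mulB) hRp.hasFDerivAt hMd
  have hkey : fderiv ℝ R' p v = R p * dM + dR * Mf p := by
    erw [hR'd.fderiv]
    erw [ContinuousLinearMap.comp_apply, ContinuousLinearMap.prod_apply,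
      IsBoundedBilinearMap.deriv_apply]
    simp only [bilinCLM_apply]
    erw [hMdv]
    simp [mulB, LinearMap.mul_apply', ← hdR]
  -- orthogonality n ⬝ᵥ dn = 0
  have hOd : HasFDerivAt (fun q => N₀ q ⬝ᵥ N₀ q)
      (((bilinCLM dotB).isBoundedBilinearMap.deriv (n, n)).comp
        ((fderiv ℝ N₀ p).prod (fderiv ℝ N₀ p))) p :=
    hasFDerivAt_bilin (bilinCLM dotB) hN' hN'
  have hconst : (fun q => N₀ q ⬝ᵥ N₀ q) = fun _ => (1 : ℂ) :=
    funext fun q => (dot3_eq _ _).trans (hunit q)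
  have horth : n ⬝ᵥ dn = 0 := by
    have h0 : fderiv ℝ (fun q => N₀ q ⬝ᵥ N₀ q) p = 0 := by
      rw [hconst]; exact fderiv_const_apply 1
    have h1 := hOd.fderiv
    rw [h0] at h1
    have h2 := congrArg (fun (L : (ℝ × ℝ) →L[ℝ] ℂ) => L v) h1
    simp only [ContinuousLinearMap.zero_apply, ContinuousLinearMap.comp_apply,
      ContinuousLinearMap.prod_apply, IsBoundedBilinearMap.deriv_apply, bilinCLM_apply,
      dotB, LinearMap.mk₂_apply] at h2
    rw [dotProduct_comm (fderiv ℝ N₀ p v) n] at h2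
    have := h2.symm
    rw [← two_mul] at this
    field_simp at this
    simpa [hdn] using this
  have horth' : dn ⬝ᵥ n = 0 := by rw [dotProduct_comm]; exact horth
  -- inverse of R'
  have hRdet : IsUnit (R p).det := (Matrix.isUnit_iff_isUnit_det _).mp (hinv p hp)
  have hRinvR : (R p)⁻¹ * R p = 1 := Matrix.nonsing_inv_mul _ hRdet
  have hR'inv : (R' p)⁻¹ = Mf p * (R p)⁻¹ := by
    rw [hR'p, Matrix.mul_inv_rev, hMinv]
  set Am : A3 := (R p)⁻¹ * dR with hAm
  have hmat : (R' p)⁻¹ * fderiv ℝ R' p v = Mf p * dM + Mf p * Am * Mf p := by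
    rw [hR'inv, hkey, mul_add]
    congr 1
    · rw [mul_assoc (Mf p), ← mul_assoc ((R p)⁻¹), hRinvR, one_mul]
    · rw [hAm, ← mul_assoc, ← mul_assoc]
  -- mulVec computations
  have hMw : ∀ w : V3, (Mf p).mulVec w = w - 2 • ((n ⬝ᵥ w) • n) := by
    intro w
    rw [hMf]
    rw [Matrix.sub_mulVec, Matrix.one_mulVec, Matrix.smul_mulVec, vv_mulVec]
  have hMn : (Mf p).mulVec n = -n := by
    rw [hMw, hnn, one_smul, two_smul]; abel
  have hdMn : dM.mulVec n = -(2 • dn) := by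
    rw [hdM, Matrix.neg_mulVec, Matrix.smul_mulVec, Matrix.add_mulVec,
      vv_mulVec, vv_mulVec, horth', hnn, zero_smul, one_smul, zero_add]
  have hcrossM : ∀ w : V3, cross3 n ((Mf p).mulVec w) = cross3 n w := by
    intro w
    rw [hMw]
    show (crossProduct n) (w - 2 • ((n ⬝ᵥ w) • n)) = (crossProduct n) w
    rw [map_sub, map_nsmul, _root_.map_smul, cross_self, smul_zero, smul_zero, sub_zero]
  -- final computation
  rw [hmat, Matrix.add_mulVec, ← Matrix.mulVec_mulVec, ← Matrix.mulVec_mulVec,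
    ← Matrix.mulVec_mulVec, hMn, hdMn]
  have h1 : cross3 n ((Mf p).mulVec (-(2 • dn))) = -(2 • cross3 n dn) := by
    rw [show (Mf p).mulVec (-(2 • dn)) = -((Mf p).mulVec (2 • dn)) by
      rw [Matrix.mulVec_neg]]
    rw [show cross3 n (-((Mf p).mulVec (2 • dn))) = -(cross3 n ((Mf p).mulVec (2 • dn))) by
      simp [cross3]]
    rw [hcrossM]
    show -(crossProduct n) (2 • dn) = -(2 • (crossProduct n) dn)
    exact congrArg Neg.neg (map_nsmul (crossProduct n) 2 dn)
  have h2 : cross3 n ((Mf p).mulVec (Am.mulVec (-n))) = -(cross3 n (Am.mulVec n)) := by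
    rw [show Am.mulVec (-n) = -(Am.mulVec n) by rw [Matrix.mulVec_neg]]
    rw [show (Mf p).mulVec (-(Am.mulVec n)) = -((Mf p).mulVec (Am.mulVec n)) by
      rw [Matrix.mulVec_neg]]
    rw [show cross3 n (-((Mf p).mulVec (Am.mulVec n))) =
        -(cross3 n ((Mf p).mulVec (Am.mulVec n))) by simp [cross3]]
    rw [hcrossM]
  rw [show cross3 n ((Mf p).mulVec (-(2 • dn)) + (Mf p).mulVec (Am.mulVec (-n))) =
      cross3 n ((Mf p).mulVec (-(2 • dn))) + cross3 n ((Mf p).mulVec (Am.mulVec (-n))) by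
    simp [cross3]]
  rw [h1, h2, hAm]
  abel
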